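/- Let S : [0,∞) → ℂ satisfy ∫₀^∞ |S(v)| dv < ∞. Define k₊(p) = (1/i)·∫₀^∞ S(v)·(1/(p - iv)) dv. Then k₊·i, i.e. the function p ↦ ∫₀^∞ S(v)/(p - iv) dv, is holomorphic on ℂ \ i[0,∞); in particular it is holomorphic on the region {p : -π < arg p < 0} ∪ {p : 0 < arg p < π/2} ∪ (0,∞) and agrees with K₊(p) = ∫₀^∞ e^{-pt}(∫₀^∞ e^{ivt}S(v)dv)dt on {Re p > 0}. -/

import Mathlib

open MeasureTheory Set Filter Complex Topology

set_option maxHeartbeats 1000000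

lemma aux_integral_cexp_Ioi {c : ℂ} (hc : c.re < 0) :
    ∫ t in Ioi (0:ℝ), Complex.exp (c * t) = -c⁻¹ := by
  have hc0 : c ≠ 0 := by
    intro h; rw [h] at hc; simp at hc
  have D : ∀ x : ℝ, HasDerivAt (fun y : ℝ => Complex.exp (c * y) / c)
      (Complex.exp (c * x)) x := by
    intro x
    rw [← mul_div_cancel_right₀ (Complex.exp (c * x)) hc0]
    apply ((Complex.hasDerivAt_exp _).comp x _).div_const c
    simpa only [mul_one, id_eq] using ((hasDerivAt_id (x : ℂ)).const_mul c).comp_ofReal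
  have hint : IntegrableOn (fun t : ℝ => Complex.exp (c * t)) (Ioi 0) := by
    refine Integrable.mono' (g := fun t : ℝ => Real.exp (-(-c.re) * t)) ?_ ?_ ?_
    · exact exp_neg_integrableOn_Ioi 0 (by linarith)
    · exact (Complex.continuous_exp.comp
        (continuous_const.mul Complex.continuous_ofReal)).aestronglyMeasurable
    · filter_upwards with t
      simp [Complex.norm_exp, Complex.mul_re]
  have htend : Tendsto (fun t : ℝ => Complex.exp (c * t) / c) atTop (𝓝 0) := by
    rw [tendsto_zero_iff_norm_tendsto_zero]
    have heq : (fun t : ℝ => ‖Complex.exp (c * t) / c‖)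
        = fun t : ℝ => Real.exp (c.re * t) / ‖c‖ := by
      funext t
      simp [Complex.norm_exp, Complex.mul_re]
    rw [heq]
    have h1 : Tendsto (fun t : ℝ => c.re * t) atTop atBot := by
      simpa using (tendsto_const_mul_atBot_of_neg hc).mpr (tendsto_id (α := ℝ))
    simpa using (Real.tendsto_exp_atBot.comp h1).div_const ‖c‖
  have heval := integral_Ioi_of_hasDerivAt_of_tendsto' (fun x _ => D x) hint htend
  rw [heval]
  norm_num

theorem stmt_9 (S : ℝ → ℂ) (hS : IntegrableOn S (Ioi 0)) :
    DifferentiableOn ℂ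
      (fun p : ℂ => ∫ v in Ioi (0:ℝ), S v / (p - Complex.I * v))
      {p : ℂ | ∀ v : ℝ, 0 ≤ v → p ≠ Complex.I * v} ∧
    ∀ p : ℂ, 0 < p.re →
      (∫ v in Ioi (0:ℝ), S v / (p - Complex.I * v))
        = ∫ t in Ioi (0:ℝ), Complex.exp (-(p * t)) *
            ∫ v in Ioi (0:ℝ), Complex.exp (Complex.I * v * t) * S v := by
  constructor
  · -- Holomorphy
    intro p₀ hp₀
    set C : Set ℂ := {z : ℂ | z.re = 0 ∧ 0 ≤ z.im} with hCdef
    have hC : IsClosed C :=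
      (isClosed_eq Complex.continuous_re continuous_const).inter
        (isClosed_le continuous_const Complex.continuous_im)
    have hmem : ∀ v : ℝ, 0 ≤ v → (Complex.I * v) ∈ C := by
      intro v hv
      constructor <;> simp [Complex.mul_re, Complex.mul_im, hv]
    have hp₀C : p₀ ∉ C := by
      rintro ⟨h1, h2⟩
      exact hp₀ p₀.im h2 (by
        apply Complex.ext <;> simp [Complex.mul_re, Complex.mul_im, h1])
    set d : ℝ := Metric.infDist p₀ C with hd
    have hdpos : 0 < d := by
      rw [hd, ← hC.notMem_iff_infDist_pos ⟨0, by simp [hCdef]⟩]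
      exact hp₀C
    have hd2 : 0 < d / 2 := half_pos hdpos
    have hlow : ∀ p ∈ Metric.ball p₀ (d/2), ∀ v : ℝ, 0 ≤ v →
        d/2 ≤ ‖p - Complex.I * v‖ := by
      intro p hp v hv
      have h1 : d ≤ dist p₀ (Complex.I * v) := Metric.infDist_le_dist_of_mem (hmem v hv)
      have h2 : dist p₀ (Complex.I * v) ≤ dist p₀ p + dist p (Complex.I * v) :=
        dist_triangle _ _ _
      have h3 : dist p₀ p < d / 2 := by rwa [dist_comm, ← Metric.mem_ball]
      have h4 : d / 2 ≤ dist p (Complex.I * v) := by linarith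
      rwa [dist_eq_norm] at h4
    set μ : Measure ℝ := volume.restrict (Ioi (0:ℝ)) with hμ
    have hFmeas : ∀ᶠ x in 𝓝 p₀, AEStronglyMeasurable
        (fun v : ℝ => S v / (x - Complex.I * v)) μ := by
      filter_upwards with x
      exact (hS.aemeasurable.div
        ((measurable_const.sub
          (measurable_const.mul Complex.measurable_ofReal)).aemeasurable)).aestronglyMeasurable
    have hFint : Integrable (fun v : ℝ => S v / (p₀ - Complex.I * v)) μ := by
      refine Integrable.mono' (g := fun v => ‖S v‖ / (d/2)) (hS.norm.div_const _)
        ((hS.aemeasurable.div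
          ((measurable_const.sub
            (measurable_const.mul Complex.measurable_ofReal)).aemeasurable)).aestronglyMeasurable)
        ?_
      filter_upwards [ae_restrict_mem measurableSet_Ioi] with v hv
      rw [norm_div]
      have hb := hlow p₀ (Metric.mem_ball_self hd2) v (le_of_lt hv)
      gcongr
    have hF'meas : AEStronglyMeasurable
        (fun v : ℝ => S v * (-1 / (p₀ - Complex.I * v) ^ 2)) μ := by
      have hden : Measurable fun v : ℝ => (-1 : ℂ) / (p₀ - Complex.I * v) ^ 2 :=
        measurable_const.div
          ((measurable_const.sub
            (measurable_const.mul Complex.measurable_ofReal)).pow_const 2)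
      exact hS.aestronglyMeasurable.mul hden.aestronglyMeasurable
    have hbound : ∀ᵐ v ∂μ, ∀ x ∈ Metric.ball p₀ (d/2),
        ‖S v * (-1 / (x - Complex.I * v) ^ 2)‖ ≤ ‖S v‖ / (d/2) ^ 2 := by
      filter_upwards [ae_restrict_mem measurableSet_Ioi] with v hv x hx
      have hb := hlow x hx v (le_of_lt hv)
      rw [norm_mul, norm_div, norm_neg, norm_one, norm_pow, mul_one_div]
      gcongr
    have hbint : Integrable (fun v : ℝ => ‖S v‖ / (d/2) ^ 2) μ :=
      hS.norm.div_const _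
    have hdiff : ∀ᵐ v ∂μ, ∀ x ∈ Metric.ball p₀ (d/2),
        HasDerivAt (fun y : ℂ => S v / (y - Complex.I * v))
          (S v * (-1 / (x - Complex.I * v) ^ 2)) x := by
      filter_upwards [ae_restrict_mem measurableSet_Ioi] with v hv x hx
      have hb := hlow x hx v (le_of_lt hv)
      have hne : x - Complex.I * v ≠ 0 := by
        intro h
        rw [h, norm_zero] at hb
        linarith
      have h1 : HasDerivAt (fun y : ℂ => y - Complex.I * v) 1 x :=
        (hasDerivAt_id x).sub_const _
      have h2 := (h1.inv hne).const_mul (S v)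
      simpa only [div_eq_mul_inv, Pi.inv_apply] using h2
    have key := hasDerivAt_integral_of_dominated_loc_of_deriv_le
      (F := fun (x : ℂ) (v : ℝ) => S v / (x - Complex.I * v))
      (F' := fun (x : ℂ) (v : ℝ) => S v * (-1 / (x - Complex.I * v) ^ 2))
      (bound := fun v : ℝ => ‖S v‖ / (d/2) ^ 2)
      (Metric.ball_mem_nhds p₀ hd2) hFmeas hFint hF'meas hbound hbint hdiff
    exact key.2.differentiableAt.differentiableWithinAt
  · -- Fubini identity
    intro p hp
    have hmeas : AEStronglyMeasurable
        (Function.uncurry fun (t v : ℝ) =>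
          Complex.exp (-(p * t)) * (Complex.exp (Complex.I * v * t) * S v))
        ((volume.restrict (Ioi (0:ℝ))).prod (volume.restrict (Ioi (0:ℝ)))) := by
      apply AEStronglyMeasurable.mul
      · exact (Complex.continuous_exp.comp
          (((continuous_const.mul Complex.continuous_ofReal).neg).comp
            continuous_fst)).aestronglyMeasurable
      · apply AEStronglyMeasurable.mul
        · exact (Complex.continuous_exp.comp
            (((continuous_const.mul (Complex.continuous_ofReal.comp continuous_snd)).mul
              (Complex.continuous_ofReal.comp continuous_fst)))).aestronglyMeasurable
        · exact hS.aestronglyMeasurable.comp_snd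
    have hinteg : Integrable
        (Function.uncurry fun (t v : ℝ) =>
          Complex.exp (-(p * t)) * (Complex.exp (Complex.I * v * t) * S v))
        ((volume.restrict (Ioi (0:ℝ))).prod (volume.restrict (Ioi (0:ℝ)))) := by
      have hbd : Integrable (fun z : ℝ × ℝ => Real.exp (-p.re * z.1) * ‖S z.2‖)
          ((volume.restrict (Ioi (0:ℝ))).prod (volume.restrict (Ioi (0:ℝ)))) :=
        Integrable.mul_prod (exp_neg_integrableOn_Ioi 0 hp) hS.norm
      refine hbd.mono' hmeas ?_
      filter_upwards with z
      rw [Function.uncurry]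
      rw [norm_mul, norm_mul]
      have h1 : ‖Complex.exp (-(p * z.1))‖ = Real.exp (-p.re * z.1) := by
        simp [Complex.norm_exp, Complex.mul_re]
      have h2 : ‖Complex.exp (Complex.I * z.2 * z.1)‖ = 1 := by
        simp [Complex.norm_exp, Complex.mul_re, Complex.mul_im]
      rw [h1, h2, one_mul]
    calc (∫ v in Ioi (0:ℝ), S v / (p - Complex.I * v))
        = ∫ v in Ioi (0:ℝ), ∫ t in Ioi (0:ℝ),
            Complex.exp (-(p * t)) * (Complex.exp (Complex.I * v * t) * S v) := by
          refine integral_congr_ae (Eventually.of_forall fun v => ?_)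
          have hcomb : ∀ t : ℝ, Complex.exp (-(p * t)) * (Complex.exp (Complex.I * v * t) * S v)
              = Complex.exp ((Complex.I * v - p) * t) * S v := by
            intro t
            rw [mul_comm (Complex.exp (Complex.I * v * t)) (S v), ← mul_assoc,
              mul_comm (Complex.exp (-(p * t))), mul_assoc, ← Complex.exp_add]
            ring_nf
          simp_rw [hcomb]
          rw [MeasureTheory.integral_mul_const]
          rw [aux_integral_cexp_Ioi
            (by simp [Complex.sub_re, Complex.mul_re]; linarith : (Complex.I * v - p).re < 0)]
          have hne : p - Complex.I * v ≠ 0 := by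
            intro h
            have := congrArg Complex.re h
            simp [Complex.sub_re, Complex.mul_re] at this
            linarith
          have hne' : Complex.I * v - p ≠ 0 := by
            intro h
            apply hne
            rw [← neg_sub] at h
            simpa using congrArg Neg.neg h
          field_simp
          ring
      _ = ∫ t in Ioi (0:ℝ), ∫ v in Ioi (0:ℝ),
            Complex.exp (-(p * t)) * (Complex.exp (Complex.I * v * t) * S v) :=
          (integral_integral_swap hinteg).symm
      _ = ∫ t in Ioi (0:ℝ), Complex.exp (-(p * t)) *
            ∫ v in Ioi (0:ℝ), Complex.exp (Complex.I * v * t) * S v := by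
          refine integral_congr_ae (Eventually.of_forall fun t => ?_)
          exact MeasureTheory.integral_const_mul _ _
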